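/- Under Trailing Rule a with p + q > 1, from a tied score x-x: W(A,x,x) > W(B,x,x) if and only if W(B,x+1,x) > W(A,x,x+1), since W(A,x,x) - W(B,x,x) = (p+q-1)[W(B,x+1,x) - W(A,x,x+1)]. -/
import Mathlib


/-- Under Trailing Rule a with `p + q > 1`: if `W C x y` denotes A's win probability
from the state where `C` serves (`true` = A) at score `x`–`y`, and from a tie
`W(A,x,x) = p·W(B,x+1,x) + (1-p)·W(A,x,x+1)` and
`W(B,x,x) = (1-q)·W(B,x+1,x) + q·W(A,x,x+1)`, then
`W(A,x,x) - W(B,x,x) = (p+q-1)·[W(B,x+1,x) - W(A,x,x+1)]`, and consequently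
`W(A,x,x) > W(B,x,x)` if and only if `W(B,x+1,x) > W(A,x,x+1)`. -/
theorem TRa_tie_lemma (p q : ℝ)
    (hp0 : 0 < p) (hp1 : p < 1) (hq0 : 0 < q) (hq1 : q < 1) (hpq : p + q > 1)
    (W : Bool → ℕ → ℕ → ℝ) (x : ℕ)
    (hA : W true x x = p * W false (x + 1) x + (1 - p) * W true x (x + 1))
    (hB : W false x x = (1 - q) * W false (x + 1) x + q * W true x (x + 1)) :
    W true x x - W false x x
        = (p + q - 1) * (W false (x + 1) x - W true x (x + 1)) ∧
      (W true x x > W false x x ↔ W false (x + 1) x > W true x (x + 1)) := by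
  have h1 : W true x x - W false x x
      = (p + q - 1) * (W false (x + 1) x - W true x (x + 1)) := by
    rw [hA, hB]; ring
  refine ⟨h1, ?_⟩
  constructor
  · intro h
    nlinarith [h1]
  · intro h
    nlinarith [h1]
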